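/- Let m1, m2 be positive integers with gcd(m1,m2)=1 and m2 odd, and α ∈ ℝ. For t ∈ [0,2π) define A(t) = {s ∈ [0,2π) : ℓ(s) = ℓ(t)}. Then #A(t) = m2 if t = lπ/(m1 m2) with l ≡ 0 (mod m1), 0 ≤ l < 2 m1 m2; #A(t) = 2 if t = (l+1/2)π/(m1 m2) for some 0 ≤ l < 2 m1 m2; and #A(t) = 1 for all other t ∈ [0,2π). -/

import Mathlib

open Real

noncomputable def lissajous (m1 m2 : ℕ) (α : ℝ) (t : ℝ) : ℝ × ℝ × ℝ :=
  (Real.sin (m2 * t) * Real.cos (m1 * t - α * π),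
   Real.sin (m2 * t) * Real.sin (m1 * t - α * π),
   Real.cos (m2 * t))

lemma pair_iff (a b : ℝ) :
    (Real.cos a = Real.cos b ∧ Real.sin a = Real.sin b) ↔ ∃ k : ℤ, a = b + 2*π*k := by
  constructor
  · rintro ⟨hc, hs⟩
    rcases Real.cos_eq_cos_iff.mp hc with ⟨k, hk | hk⟩
    · exact ⟨-k, by push_cast; linarith⟩
    · have hsa : Real.sin a = 0 := by
        have h1 : Real.sin b = - Real.sin a := by
          rw [hk]
          have h2 : (2:ℝ) * k * π - a = ((2*k : ℤ):ℝ) * π - a := by push_cast; ring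
          rw [h2, Real.sin_sub, Real.sin_int_mul_pi]
          have h3 : ((2*k : ℤ):ℝ) * π = (k:ℝ) * (2*π) := by push_cast; ring
          rw [h3, Real.cos_int_mul_two_pi]
          ring
        linarith [hs ▸ h1]
      rcases Real.sin_eq_zero_iff.mp hsa with ⟨n, hn⟩
      exact ⟨n - k, by push_cast; linarith⟩
  · rintro ⟨k, rfl⟩
    have h : b + 2*π*k = b + (k:ℝ) * (2*π) := by ring
    rw [h]
    exact ⟨Real.cos_add_int_mul_two_pi b k, Real.sin_add_int_mul_two_pi b k⟩

lemma count1 (c : ℝ) (hc : 0 < c) (n : ℕ) (x : ℝ) :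
    {s : ℝ | s ∈ Set.Ico 0 ((n:ℝ)*c) ∧ ∃ k : ℤ, s = x + (k:ℝ)*c}.ncard = n := by
  set x0 : ℝ := x - (⌊x/c⌋ : ℝ)*c with hx0def
  have hfl : (⌊x/c⌋ : ℝ) ≤ x/c := Int.floor_le _
  have hfl' : x/c < ⌊x/c⌋ + 1 := Int.lt_floor_add_one _
  have hx0 : 0 ≤ x0 := by
    have := (mul_le_mul_iff_left₀ hc).mpr hfl
    rw [div_mul_cancel₀ _ (ne_of_gt hc)] at this
    simp [hx0def]; linarith
  have hx0' : x0 < c := by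
    have := (mul_lt_mul_iff_left₀ hc).mpr hfl'
    rw [div_mul_cancel₀ _ (ne_of_gt hc)] at this
    simp [hx0def]; nlinarith
  have hset : {s : ℝ | s ∈ Set.Ico 0 ((n:ℝ)*c) ∧ ∃ k : ℤ, s = x + (k:ℝ)*c}
      = ↑((Finset.range n).image (fun j : ℕ => x0 + (j:ℝ)*c)) := by
    ext s
    simp only [Set.mem_setOf_eq, Set.mem_Ico, Finset.coe_image, Set.mem_image,
      Finset.mem_coe, Finset.mem_range]
    constructor
    · rintro ⟨⟨h0, hlt⟩, k, rfl⟩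
      set m : ℤ := k + ⌊x/c⌋ with hm
      have heq : x + (k:ℝ)*c = x0 + (m:ℝ)*c := by
        rw [hx0def, hm]; push_cast; ring
      have hm0 : 0 ≤ m := by
        by_contra hneg
        push_neg at hneg
        have h1 : m ≤ -1 := by omega
        have : (m:ℝ) ≤ -1 := by exact_mod_cast h1
        nlinarith [heq ▸ h0]
      have hmn : (m:ℝ) < n := by nlinarith [heq ▸ hlt]
      refine ⟨m.toNat, ?_, ?_⟩
      · have : ((m.toNat : ℤ) : ℝ) < (n:ℝ) := by rwa [Int.toNat_of_nonneg hm0]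
        exact_mod_cast this
      · rw [heq]; congr 2
        rw [show ((m.toNat : ℕ) : ℝ) = ((m.toNat : ℤ) : ℝ) by push_cast; ring, Int.toNat_of_nonneg hm0]
    · rintro ⟨j, hj, rfl⟩
      have hjn : (j:ℝ) + 1 ≤ (n:ℝ) := by exact_mod_cast hj
      refine ⟨⟨by positivity, by nlinarith⟩, (j:ℤ) - ⌊x/c⌋, by rw [hx0def]; push_cast; ring⟩
  rw [hset, Set.ncard_coe_finset, Finset.card_image_of_injective, Finset.card_range]
  intro a b hab
  have : (a:ℝ) = b := by
    field_simp at hab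
    have h2 : ((a:ℝ) - b) * c = 0 := by linarith
    rcases mul_eq_zero.mp h2 with h | h
    · linarith
    · exact absurd h (ne_of_gt hc)
  exact_mod_cast this

-- helper lemmas assumed (proved in other files)
lemma eq_of_mem_Ico {s s' : ℝ} (hs : s ∈ Set.Ico 0 (2*π)) (hs' : s' ∈ Set.Ico 0 (2*π))
    (k : ℤ) (h : s = s' + 2*π*k) : s = s' := by
  obtain ⟨h0, h1⟩ := hs
  obtain ⟨h0', h1'⟩ := hs'
  have hπ := Real.pi_pos
  have hk1 : (k:ℝ) < 1 := by nlinarith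
  have hk2 : (-1:ℝ) < k := by nlinarith
  have : k = 0 := by
    have a : k < 1 := by exact_mod_cast hk1
    have b : -1 < k := by exact_mod_cast hk2
    omega
  rw [this] at h; push_cast at h; linarith

lemma coprime_step (m1 m2 : ℕ) (hgcd : Nat.gcd m1 m2 = 1) (hm2 : 0 < m2)
    (x : ℝ) (k j : ℤ) (h2 : (m2:ℝ)*x = 2*π*k) (h1 : (m1:ℝ)*x = 2*π*j) :
    ∃ n : ℤ, x = 2*π*n := by
  have hπ := Real.pi_ne_zero
  have hR : (2*π) * ((k:ℝ)*m1) = (2*π) * ((j:ℝ)*m2) := by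
    have e1 : (m1:ℝ)*((m2:ℝ)*x) = (m1:ℝ)*(2*π*k) := by rw [h2]
    have e2 : (m2:ℝ)*((m1:ℝ)*x) = (m2:ℝ)*(2*π*j) := by rw [h1]
    nlinarith [e1, e2]
  have hcan : ((k*m1 : ℤ):ℝ) = ((j*m2 : ℤ):ℝ) := by
    push_cast
    exact mul_left_cancel₀ (by positivity) hR
  have hkm : k * (m1:ℤ) = j * (m2:ℤ) := by exact_mod_cast hcan
  have hco : IsCoprime ((m2:ℤ)) ((m1:ℤ)) := by
    rw [Int.isCoprime_iff_gcd_eq_one]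
    simpa [Int.gcd_natCast_natCast, Nat.gcd_comm] using hgcd
  have hdvd : (m2:ℤ) ∣ k := hco.dvd_of_dvd_mul_right ⟨j, by linarith [hkm]⟩
  obtain ⟨n, rfl⟩ := hdvd
  refine ⟨n, ?_⟩
  have hm2R : (m2:ℝ) ≠ 0 := by positivity
  apply mul_left_cancel₀ hm2R
  rw [h2]; push_cast; ring

lemma eq_pole (m1 m2 : ℕ) (α s t : ℝ) (hp : Real.sin (m2*t) = 0) :
    lissajous m1 m2 α s = lissajous m1 m2 α t ↔ ∃ k : ℤ, (m2:ℝ)*s = (m2:ℝ)*t + 2*π*k := by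
  simp only [lissajous, Prod.ext_iff]
  constructor
  · rintro ⟨h1, h2, h3⟩
    rw [hp, zero_mul] at h1 h2
    have hss : Real.sin ((m2:ℝ)*s) = 0 := by
      have hpy := Real.sin_sq_add_cos_sq ((m1:ℝ)*s - α*π)
      calc Real.sin ((m2:ℝ)*s)
          = Real.sin ((m2:ℝ)*s) * (Real.sin ((m1:ℝ)*s - α*π)^2 + Real.cos ((m1:ℝ)*s - α*π)^2) := by
            rw [hpy, mul_one]
        _ = Real.sin ((m1:ℝ)*s - α*π) * (Real.sin ((m2:ℝ)*s) * Real.sin ((m1:ℝ)*s - α*π))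
            + Real.cos ((m1:ℝ)*s - α*π) * (Real.sin ((m2:ℝ)*s) * Real.cos ((m1:ℝ)*s - α*π)) := by
            ring
        _ = 0 := by rw [h1, h2]; ring
    exact (pair_iff _ _).mp ⟨h3, by rw [hss, hp]⟩
  · rintro ⟨k, hk⟩
    obtain ⟨hc, hs⟩ := (pair_iff ((m2:ℝ)*s) ((m2:ℝ)*t)).mpr ⟨k, hk⟩
    rw [hs, hp]
    simp [hc]

lemma eq_nonpole (m1 m2 : ℕ) (α s t : ℝ) (hp : Real.sin (m2*t) ≠ 0) :
    lissajous m1 m2 α s = lissajous m1 m2 α t ↔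
      ((∃ k : ℤ, (m2:ℝ)*s = (m2:ℝ)*t + 2*π*k) ∧ (∃ j : ℤ, (m1:ℝ)*s = (m1:ℝ)*t + 2*π*j)) ∨
      ((∃ k : ℤ, (m2:ℝ)*s = -((m2:ℝ)*t) + 2*π*k) ∧
        (∃ j : ℤ, (m1:ℝ)*s = (m1:ℝ)*t + π + 2*π*j)) := by
  simp only [lissajous, Prod.ext_iff]
  constructor
  · rintro ⟨h1, h2, h3⟩
    have hsq : Real.sin ((m2:ℝ)*s) ^ 2 = Real.sin ((m2:ℝ)*t) ^ 2 := by
      rw [Real.sin_sq, Real.sin_sq, h3]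
    rcases sq_eq_sq_iff_eq_or_eq_neg.mp hsq with hs | hs
    · left
      rw [hs] at h1 h2
      have hc1 := mul_left_cancel₀ hp h1
      have hc2 := mul_left_cancel₀ hp h2
      refine ⟨(pair_iff _ _).mp ⟨h3, hs⟩, ?_⟩
      obtain ⟨j, hj⟩ := (pair_iff ((m1:ℝ)*s - α*π) ((m1:ℝ)*t - α*π)).mp ⟨hc1, hc2⟩
      exact ⟨j, by linarith⟩
    · right
      rw [hs] at h1 h2
      have hc1 : Real.cos ((m1:ℝ)*s - α*π) = -Real.cos ((m1:ℝ)*t - α*π) := by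
        have := mul_left_cancel₀ hp (show Real.sin ((m2:ℝ)*t) * (-Real.cos ((m1:ℝ)*s - α*π))
          = Real.sin ((m2:ℝ)*t) * Real.cos ((m1:ℝ)*t - α*π) by linarith)
        linarith
      have hc2 : Real.sin ((m1:ℝ)*s - α*π) = -Real.sin ((m1:ℝ)*t - α*π) := by
        have := mul_left_cancel₀ hp (show Real.sin ((m2:ℝ)*t) * (-Real.sin ((m1:ℝ)*s - α*π))
          = Real.sin ((m2:ℝ)*t) * Real.sin ((m1:ℝ)*t - α*π) by linarith)
        linarith
      constructor
      · refine (pair_iff _ _).mp ⟨?_, ?_⟩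
        · rw [Real.cos_neg]; exact h3
        · rw [Real.sin_neg]; exact hs
      · have hpair : Real.cos ((m1:ℝ)*s - α*π) = Real.cos (((m1:ℝ)*t - α*π) + π) ∧
            Real.sin ((m1:ℝ)*s - α*π) = Real.sin (((m1:ℝ)*t - α*π) + π) := by
          rw [Real.cos_add_pi, Real.sin_add_pi]
          exact ⟨hc1, hc2⟩
        obtain ⟨j, hj⟩ := (pair_iff _ _).mp hpair
        exact ⟨j, by linarith⟩
  · rintro (⟨⟨k, hk⟩, ⟨j, hj⟩⟩ | ⟨⟨k, hk⟩, ⟨j, hj⟩⟩)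
    · obtain ⟨hc2, hs2⟩ := (pair_iff ((m2:ℝ)*s) ((m2:ℝ)*t)).mpr ⟨k, hk⟩
      obtain ⟨hc1, hs1⟩ := (pair_iff ((m1:ℝ)*s - α*π) ((m1:ℝ)*t - α*π)).mpr
        ⟨j, by linarith⟩
      rw [hc1, hs1, hc2, hs2]
      exact ⟨rfl, rfl, rfl⟩
    · obtain ⟨hc2, hs2⟩ := (pair_iff ((m2:ℝ)*s) (-((m2:ℝ)*t))).mpr ⟨k, hk⟩
      obtain ⟨hc1, hs1⟩ := (pair_iff ((m1:ℝ)*s - α*π) (((m1:ℝ)*t - α*π) + π)).mpr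
        ⟨j, by linarith⟩
      rw [Real.cos_neg] at hc2
      rw [Real.sin_neg] at hs2
      rw [Real.cos_add_pi] at hc1
      rw [Real.sin_add_pi] at hs1
      rw [hc1, hs1, hc2, hs2]
      refine ⟨by ring, by ring, rfl⟩

lemma part1 (m1 m2 : ℕ) (hm2 : 0 < m2) (α t : ℝ) (hp : Real.sin ((m2:ℝ)*t) = 0) :
    Set.ncard {s ∈ Set.Ico (0:ℝ) (2 * π) |
      lissajous m1 m2 α s = lissajous m1 m2 α t} = m2 := by
  have hm2R : (m2:ℝ) ≠ 0 := by positivity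
  have hc : (0:ℝ) < 2*π/m2 := by positivity
  have hIco : (m2:ℝ) * (2*π/m2) = 2*π := by field_simp
  have hset : {s ∈ Set.Ico (0:ℝ) (2 * π) | lissajous m1 m2 α s = lissajous m1 m2 α t}
      = {s : ℝ | s ∈ Set.Ico 0 ((m2:ℝ)*(2*π/m2)) ∧ ∃ k : ℤ, s = t + (k:ℝ)*(2*π/m2)} := by
    ext s
    simp only [Set.mem_setOf_eq, hIco]
    rw [eq_pole m1 m2 α s t hp]
    constructor
    · rintro ⟨hs, k, hk⟩
      refine ⟨hs, k, ?_⟩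
      apply mul_left_cancel₀ hm2R
      rw [hk]; field_simp
    · rintro ⟨hs, k, rfl⟩
      exact ⟨hs, k, by field_simp⟩
  rw [hset, count1 (2*π/m2) hc m2 t]

lemma part2 (m1 m2 : ℕ) (hm1 : 0 < m1) (hm2 : 0 < m2)
    (hgcd : Nat.gcd m1 m2 = 1) (hodd : Odd m2) (α t : ℝ)
    (ht : t ∈ Set.Ico (0:ℝ) (2 * π)) (l : ℕ)
    (htl : t = ((l:ℝ) + 1/2) * π / ((m1:ℝ) * (m2:ℝ))) :
    Set.ncard {s ∈ Set.Ico (0:ℝ) (2 * π) |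
      lissajous m1 m2 α s = lissajous m1 m2 α t} = 2 := by
  have hπ := Real.pi_pos
  have hπ0 := Real.pi_ne_zero
  have hm1R : (m1:ℝ) ≠ 0 := by positivity
  have hm2R : (m2:ℝ) ≠ 0 := by positivity
  obtain ⟨r, hr⟩ := hodd
  have ht2 : 2*(m1:ℝ)*(m2:ℝ)*t = (2*(l:ℝ)+1)*π := by rw [htl]; field_simp
  -- nonpole
  have hp : Real.sin ((m2:ℝ)*t) ≠ 0 := by
    intro h
    obtain ⟨n, hn⟩ := Real.sin_eq_zero_iff.mp h
    have h1 : 2*(m1:ℝ)*((n:ℝ)*π) = (2*(l:ℝ)+1)*π := by rw [hn]; linarith [ht2]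
    have h2 : (2*(m1:ℤ)*n : ℤ) = 2*(l:ℤ)+1 := by
      have : ((2*(m1:ℤ)*n : ℤ):ℝ) = ((2*(l:ℤ)+1 : ℤ):ℝ) := by
        push_cast
        apply mul_right_cancel₀ hπ0
        push_cast at h1; linarith
      exact_mod_cast this
    obtain ⟨c, hc⟩ : Even (2*(l:ℤ)+1) := h2 ▸ ⟨(m1:ℤ)*n, by ring⟩
    omega
  -- Bezout
  have hbez1 : (1:ℤ) = m1 * Nat.gcdA m1 m2 + m2 * Nat.gcdB m1 m2 := by
    have := Nat.gcd_eq_gcd_ab m1 m2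
    rw [hgcd] at this
    exact_mod_cast this
  set N : ℤ := (l:ℤ) + r + 1 with hN
  set a : ℤ := N * Nat.gcdA m1 m2 with ha
  set b : ℤ := N * Nat.gcdB m1 m2 with hb
  have hbez : (m1:ℤ)*a + (m2:ℤ)*b = N := by rw [ha, hb]; linear_combination (-N) * hbez1
  set s0 : ℝ := -t + 2*π*a/m2 with hs0
  have hc2 : (m2:ℝ)*s0 = -((m2:ℝ)*t) + 2*π*(a:ℝ) := by rw [hs0]; field_simp
  have hbezR : (m1:ℝ)*(a:ℝ) + (m2:ℝ)*(b:ℝ) = (l:ℝ)+(r:ℝ)+1 := by exact_mod_cast hbez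
  have hrR : (m2:ℝ) = 2*(r:ℝ)+1 := by exact_mod_cast hr
  have hc1 : (m1:ℝ)*s0 = (m1:ℝ)*t + π + 2*π*((-b : ℤ):ℝ) := by
    apply mul_left_cancel₀ hm2R
    calc (m2:ℝ)*((m1:ℝ)*s0) = (m1:ℝ)*((m2:ℝ)*s0) := by ring
      _ = (m1:ℝ)*(-((m2:ℝ)*t) + 2*π*(a:ℝ)) := by rw [hc2]
      _ = (m2:ℝ)*((m1:ℝ)*t + π + 2*π*((-b : ℤ):ℝ)) := by
          push_cast
          linear_combination (-1)*ht2 + 2*π*hbezR - π*hrR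
  -- reduce s0 into [0, 2π)
  set q : ℤ := ⌊s0/(2*π)⌋ with hq
  set sstar : ℝ := s0 - 2*π*q with hsstar
  have hsI : sstar ∈ Set.Ico (0:ℝ) (2*π) := by
    have hfl : ((q:ℤ):ℝ) ≤ s0/(2*π) := Int.floor_le _
    have hfl' : s0/(2*π) < (q:ℝ) + 1 := Int.lt_floor_add_one _
    have h2π : (0:ℝ) < 2*π := by linarith
    constructor
    · rw [hsstar]
      have := (mul_le_mul_iff_left₀ h2π).mpr hfl
      rw [div_mul_cancel₀ _ (ne_of_gt h2π)] at this
      linarith [this]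
    · rw [hsstar]
      have := (mul_lt_mul_iff_left₀ h2π).mpr hfl'
      rw [div_mul_cancel₀ _ (ne_of_gt h2π)] at this
      nlinarith [this]
  set kstar : ℤ := a - m2*q with hkstar
  set jstar : ℤ := -b - m1*q with hjstar
  have hcs2 : (m2:ℝ)*sstar = -((m2:ℝ)*t) + 2*π*(kstar:ℝ) := by
    rw [hsstar, hkstar]; push_cast; linear_combination hc2
  have hcs1 : (m1:ℝ)*sstar = (m1:ℝ)*t + π + 2*π*(jstar:ℝ) := by
    rw [hsstar, hjstar]; push_cast
    push_cast at hc1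
    linear_combination hc1
  -- t ≠ sstar
  have tne : t ≠ sstar := by
    intro he
    rw [← he] at hcs1
    have hz : π*(1+2*(jstar:ℝ)) = 0 := by linarith [hcs1]
    have h1 : (1+2*(jstar:ℝ)) ≠ 0 := by
      have : (1+2*jstar : ℤ) ≠ 0 := by omega
      exact_mod_cast this
    exact (mul_ne_zero hπ0 h1) hz
  have hset : {s ∈ Set.Ico (0:ℝ) (2 * π) |
      lissajous m1 m2 α s = lissajous m1 m2 α t} = {t, sstar} := by
    ext s
    simp only [Set.mem_setOf_eq, Set.mem_insert_iff, Set.mem_singleton_iff]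
    constructor
    · rintro ⟨hsIco, hls⟩
      rw [eq_nonpole m1 m2 α s t hp] at hls
      rcases hls with ⟨⟨k, hk⟩, ⟨j, hj⟩⟩ | ⟨⟨k, hk⟩, ⟨j, hj⟩⟩
      · left
        obtain ⟨n, hn⟩ := coprime_step m1 m2 hgcd hm2 (s - t) k j
          (by linear_combination hk) (by linear_combination hj)
        exact eq_of_mem_Ico hsIco ht n (by linarith)
      · right
        obtain ⟨n, hn⟩ := coprime_step m1 m2 hgcd hm2 (s - sstar) (k - kstar) (j - jstar)
          (by push_cast; linear_combination hk - hcs2) (by push_cast; linear_combination hj - hcs1)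
        exact eq_of_mem_Ico hsIco hsI n (by linarith)
    · rintro (h | h)
      · rw [h]
        refine ⟨ht, ?_⟩
        rw [eq_nonpole m1 m2 α t t hp]
        exact Or.inl ⟨⟨0, by push_cast; ring⟩, ⟨0, by push_cast; ring⟩⟩
      · rw [h]
        refine ⟨hsI, ?_⟩
        rw [eq_nonpole m1 m2 α sstar t hp]
        exact Or.inr ⟨⟨kstar, hcs2⟩, ⟨jstar, hcs1⟩⟩
  rw [hset, Set.ncard_pair tne]

lemma part3 (m1 m2 : ℕ) (hm1 : 0 < m1) (hm2 : 0 < m2)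
    (hgcd : Nat.gcd m1 m2 = 1) (hodd : Odd m2) (α t : ℝ)
    (ht : t ∈ Set.Ico (0:ℝ) (2 * π))
    (hno : ¬ ∃ l : ℕ, l < 2 * m1 * m2 ∧
        (t = l * π / (m1 * m2) ∧ m1 ∣ l ∨ t = (l + 1/2) * π / (m1 * m2))) :
    Set.ncard {s ∈ Set.Ico (0:ℝ) (2 * π) |
      lissajous m1 m2 α s = lissajous m1 m2 α t} = 1 := by
  have hπ := Real.pi_pos
  have hπ0 := Real.pi_ne_zero
  have hm1R : (0:ℝ) < m1 := by positivity
  have hm2R : (0:ℝ) < m2 := by positivity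
  obtain ⟨ht0, ht1⟩ := ht
  obtain ⟨r, hr⟩ := hodd
  have hp : Real.sin ((m2:ℝ)*t) ≠ 0 := by
    intro h
    obtain ⟨n, hn⟩ := Real.sin_eq_zero_iff.mp h
    have hn0 : 0 ≤ n := by
      have : (0:ℝ) ≤ (n:ℝ) := by nlinarith
      exact_mod_cast this
    have hn2 : n < 2*(m2:ℤ) := by
      have : (n:ℝ) < 2*(m2:ℝ) := by nlinarith
      exact_mod_cast this
    refine hno ⟨n.toNat * m1, ?_, Or.inl ⟨?_, Dvd.intro_left _ rfl⟩⟩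
    · have hn2' : n.toNat < 2*m2 := by omega
      calc n.toNat * m1 < 2*m2*m1 := by
            exact Nat.mul_lt_mul_of_lt_of_le hn2' (le_refl m1) hm1
        _ = 2*m1*m2 := by ring
    · rw [eq_div_iff (by positivity)]
      have hnn : ((n.toNat:ℕ):ℝ) = (n:ℝ) := by exact_mod_cast Int.toNat_of_nonneg hn0
      push_cast
      rw [hnn]
      linear_combination (-(m1:ℝ))*hn
  have hset : {s ∈ Set.Ico (0:ℝ) (2 * π) |
      lissajous m1 m2 α s = lissajous m1 m2 α t} = {t} := by
    ext s
    simp only [Set.mem_setOf_eq, Set.mem_singleton_iff]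
    constructor
    · rintro ⟨hsIco, hls⟩
      rw [eq_nonpole m1 m2 α s t hp] at hls
      rcases hls with ⟨⟨k, hk⟩, ⟨j, hj⟩⟩ | ⟨⟨k, hk⟩, ⟨j, hj⟩⟩
      · obtain ⟨n, hn⟩ := coprime_step m1 m2 hgcd hm2 (s - t) k j
          (by linear_combination hk) (by linear_combination hj)
        exact eq_of_mem_Ico hsIco ⟨ht0, ht1⟩ n (by linarith)
      · exfalso
        set c : ℤ := 2*k*m1 - m2 - 2*j*m2 with hc
        have hceq : 2*(m1:ℝ)*(m2:ℝ)*t = π*(c:ℝ) := by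
          rw [hc]; push_cast
          linear_combination (m1:ℝ)*hk - (m2:ℝ)*hj
        have hprod : (0:ℝ) < (m1:ℝ)*(m2:ℝ) := mul_pos hm1R hm2R
        have hc0 : 0 ≤ c := by
          have h0 : (0:ℝ) ≤ (c:ℝ) := by
            nlinarith [mul_nonneg (mul_nonneg hm1R.le hm2R.le) ht0]
          exact_mod_cast h0
        have hc4 : c < 4*((m1*m2 : ℕ):ℤ) := by
          have hlt : (m1:ℝ)*(m2:ℝ)*t < (m1:ℝ)*(m2:ℝ)*(2*π) := by
            exact mul_lt_mul_of_pos_left ht1 hprod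
          have h4 : (c:ℝ) < 4*((m1*m2 : ℕ):ℝ) := by push_cast; nlinarith [hlt, hπ]
          exact_mod_cast h4
        have hm2Z : (m2:ℤ) = 2*(r:ℤ)+1 := by exact_mod_cast hr
        have hm2Z' : (m2:ℤ) = 2*(r:ℤ)+1 := by exact_mod_cast hr
        obtain ⟨d, hd⟩ : ∃ d : ℤ, c = 2*d+1 :=
          ⟨k*m1 - j*m2 - r - 1, by rw [hc, hm2Z']; ring⟩
        have hd0 : 0 ≤ d := by omega
        refine hno ⟨d.toNat, ?_, Or.inr ?_⟩
        · have h4a : d < 2*((m1*m2 : ℕ):ℤ) := by omega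
          have h4b : (d.toNat : ℤ) < 2*((m1*m2:ℕ):ℤ) := by rwa [Int.toNat_of_nonneg hd0]
          have h4c : d.toNat < 2*(m1*m2) := by exact_mod_cast h4b
          rw [Nat.mul_assoc]
          exact h4c
        · rw [eq_div_iff (by positivity)]
          have hdt : c = 2*(d.toNat:ℤ)+1 := by omega
          have hcast : (c:ℝ) = 2*(d.toNat:ℝ)+1 := by exact_mod_cast hdt
          rw [hcast] at hceq
          push_cast
          linear_combination (1/2)*hceq
    · intro h
      rw [h]
      refine ⟨⟨ht0, ht1⟩, ?_⟩
      rw [eq_nonpole m1 m2 α t t hp]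
      exact Or.inl ⟨⟨0, by push_cast; ring⟩, ⟨0, by push_cast; ring⟩⟩
  rw [hset, Set.ncard_singleton]

theorem stmt2 (m1 m2 : ℕ) (hm1 : 0 < m1) (hm2 : 0 < m2)
    (hgcd : Nat.gcd m1 m2 = 1) (hodd : Odd m2) (α t : ℝ)
    (ht : t ∈ Set.Ico (0:ℝ) (2 * π)) :
    ((∃ l : ℕ, l < 2 * m1 * m2 ∧ m1 ∣ l ∧ t = l * π / (m1 * m2)) →
      Set.ncard {s ∈ Set.Ico (0:ℝ) (2 * π) |
        lissajous m1 m2 α s = lissajous m1 m2 α t} = m2) ∧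
    ((∃ l : ℕ, l < 2 * m1 * m2 ∧ t = (l + 1/2) * π / (m1 * m2)) →
      Set.ncard {s ∈ Set.Ico (0:ℝ) (2 * π) |
        lissajous m1 m2 α s = lissajous m1 m2 α t} = 2) ∧
    ((¬ ∃ l : ℕ, l < 2 * m1 * m2 ∧
        (t = l * π / (m1 * m2) ∧ m1 ∣ l ∨ t = (l + 1/2) * π / (m1 * m2))) →
      Set.ncard {s ∈ Set.Ico (0:ℝ) (2 * π) |
        lissajous m1 m2 α s = lissajous m1 m2 α t} = 1) := by
  have hm1R : (m1:ℝ) ≠ 0 := by positivity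
  have hm2R : (m2:ℝ) ≠ 0 := by positivity
  refine ⟨?_, ?_, ?_⟩
  · rintro ⟨l, hl, hdvd, htl⟩
    obtain ⟨qn, rfl⟩ := hdvd
    apply part1 m1 m2 hm2 α t
    have hmt : (m2:ℝ)*t = (qn:ℝ)*π := by
      rw [htl]; push_cast; field_simp
    rw [hmt]
    exact Real.sin_nat_mul_pi qn
  · rintro ⟨l, hl, htl⟩
    exact part2 m1 m2 hm1 hm2 hgcd hodd α t ht l htl
  · intro hno
    exact part3 m1 m2 hm1 hm2 hgcd hodd α t ht hno
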